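/- Let [e_1,...,e_r] be a del Pezzo Wahl chain of degree ℓ ≥ 5. If the marking is of type (II), then the central mark e_i satisfies e_i ≥ 5. If the marking is of type (I) and the marking data is not [0,2̲] (degree 5), then the central mark is ≥ 3. -/

import Mathlib

/-- The value of a Hirzebruch–Jung continued fraction `[e₁,…,e_r]`,
computed as `e₁ - 1/[e₂,…,e_r]` with `[e_r] = e_r`. -/
def hjVal : List ℤ → ℚ
  | [] => 0
  | [x] => (x : ℚ)
  | x :: y :: xs => (x : ℚ) - (hjVal (y :: xs))⁻¹

/-- `IsHJ m q L` : `L` is the HJ continued fraction expansion of `m/q`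
(all entries at least 2 and value `m/q`). -/
def IsHJ (m q : ℤ) (L : List ℤ) : Prop :=
  (∀ e ∈ L, 2 ≤ e) ∧ hjVal L = (m : ℚ) / (q : ℚ)

/-- `IsWahlChain n a L` : `L` is the Wahl chain of `n²/(na-1)` for coprime `0 < a < n`. -/
def IsWahlChain (n a : ℤ) (L : List ℤ) : Prop :=
  0 < a ∧ a < n ∧ Int.gcd n a = 1 ∧ IsHJ (n ^ 2) (n * a - 1) L

/-- One blow-down move on a chain: `[…,u,1,v,…] ↦ […,u-1,v-1,…]`,
including the boundary cases `[1,v,…] ↦ [v-1,…]` and `[…,u,1] ↦ […,u-1]`. -/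
inductive BDStep : List ℤ → List ℤ → Prop
  | mid (l r : List ℤ) (u v : ℤ) :
      BDStep (l ++ u :: 1 :: v :: r) (l ++ (u - 1) :: (v - 1) :: r)
  | left (r : List ℤ) (v : ℤ) : BDStep (1 :: v :: r) ((v - 1) :: r)
  | right (l : List ℤ) (u : ℤ) : BDStep (l ++ [u, 1]) (l ++ [u - 1])

/-- A zero continued fraction: a chain that blows down to `[1,1]`. -/
def IsZCF (L : List ℤ) : Prop :=
  Relation.ReflTransGen BDStep L [1, 1]

/-- `AdmitsZCF L lam` : one can decrease some entries of `L` by positive integers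
with total sum `lam + 1` so that the result is a zero continued fraction. -/
def AdmitsZCF (L : List ℤ) (lam : ℤ) : Prop :=
  ∃ K : List ℤ, K.length = L.length ∧ (∀ i : ℕ, K.getD i 0 ≤ L.getD i 0) ∧
    L.sum - K.sum = lam + 1 ∧ IsZCF K

section Aux

lemma bdstep_length {K K' : List ℤ} (h : BDStep K K') : K.length = K'.length + 1 := by
  cases h <;> simp <;> omega

lemma bdstep_sum {K K' : List ℤ} (h : BDStep K K') : K.sum ≤ K'.sum + 3 := by
  cases h <;> simp [List.sum_append] <;> omega

lemma zcf_len_sum {K : List ℤ} (h : IsZCF K) :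
    2 ≤ K.length ∧ K.sum ≤ 3 * (K.length : ℤ) - 4 := by
  unfold IsZCF at h
  induction h using Relation.ReflTransGen.head_induction_on with
  | refl => simp
  | head hstep _ ih =>
    have h1 := bdstep_length hstep
    have h2 := bdstep_sum hstep
    have h3 := ih.1
    have h4 := ih.2
    constructor <;> omega
def nd : List ℤ → ℤ × ℤ
  | [] => (1, 0)
  | x :: xs => (x * (nd xs).1 - (nd xs).2, (nd xs).1)

lemma nd_pos {L : List ℤ} (h : ∀ e ∈ L, 2 ≤ e) :
    0 ≤ (nd L).2 ∧ (nd L).2 < (nd L).1 := by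
  induction L with
  | nil => simp [nd]
  | cons x xs ih =>
    have hx : 2 ≤ x := h x (by simp)
    have ih' := ih (fun e he => h e (by simp [he]))
    simp only [nd]
    constructor
    · omega
    · nlinarith [ih'.1, ih'.2]

lemma nd_coprime {L : List ℤ} : IsCoprime (nd L).1 (nd L).2 := by
  induction L with
  | nil => exact isCoprime_one_left
  | cons x xs ih =>
    simp only [nd]
    have h1 : IsCoprime (-(nd xs).2) (nd xs).1 := (ih.symm).neg_left
    have h2 := h1.add_mul_left_left x
    have : -(nd xs).2 + (nd xs).1 * x = x * (nd xs).1 - (nd xs).2 := by ring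
    rwa [this] at h2

lemma hj_gt_one {L : List ℤ} (h : ∀ e ∈ L, 2 ≤ e) (hne : L ≠ []) : 1 < hjVal L := by
  induction L with
  | nil => simp at hne
  | cons x xs ih =>
    have hx : 2 ≤ x := h x (by simp)
    cases xs with
    | nil =>
      show (1:ℚ) < (x:ℚ)
      exact_mod_cast by omega
    | cons y t =>
      have ih' := ih (fun e he => h e (by simp [he])) (by simp)
      show (1:ℚ) < (x:ℚ) - (hjVal (y :: t))⁻¹
      have h1 : (0:ℚ) < (hjVal (y :: t))⁻¹ := by positivity
      have h2 : (hjVal (y :: t))⁻¹ < 1 := by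
        rw [inv_lt_one_iff₀]; right; exact ih'
      have : (2:ℚ) ≤ (x:ℚ) := by exact_mod_cast hx
      linarith

lemma hjVal_nd {L : List ℤ} (h : ∀ e ∈ L, 2 ≤ e) (hne : L ≠ []) :
    hjVal L = ((nd L).1 : ℚ) / ((nd L).2 : ℚ) := by
  induction L with
  | nil => simp at hne
  | cons x xs ih =>
    cases xs with
    | nil => simp [hjVal, nd]
    | cons y t =>
      have hT : ∀ e ∈ y :: t, 2 ≤ e := fun e he => h e (by simp [he])
      have ih' := ih hT (by simp)
      have hpos := nd_pos hT
      have hP : (0:ℤ) < (nd (y :: t)).1 := by omega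
      show (x:ℚ) - (hjVal (y :: t))⁻¹ = _
      rw [ih']
      rw [show nd (x::y::t) = (x * (nd (y::t)).1 - (nd (y::t)).2, (nd (y::t)).1) from rfl]
      have hPQ : ((nd (y :: t)).1 : ℚ) ≠ 0 := by exact_mod_cast hP.ne'
      rw [inv_div, eq_div_iff hPQ, sub_mul, div_mul_cancel₀ _ hPQ]
      push_cast
      ring

lemma frac_aux {v : ℚ} (hv : 1 < v) : 0 < v⁻¹ ∧ v⁻¹ < 1 :=
  ⟨by positivity, by rw [inv_lt_one_iff₀]; right; exact hv⟩

lemma int_cast_between {p q : ℤ} (h1 : (0:ℚ) < (p:ℚ) - (q:ℚ)) (h2 : (p:ℚ) - (q:ℚ) < 1) : False := by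
  have h1' : (0:ℤ) < p - q := by exact_mod_cast (by push_cast; linarith : ((0:ℤ):ℚ) < ((p - q : ℤ) : ℚ))
  have h2' : (p - q : ℤ) < 1 := by exact_mod_cast (by push_cast; linarith : ((p - q : ℤ):ℚ) < ((1:ℤ):ℚ))
  omega

lemma hj_unique : ∀ L M : List ℤ, (∀ e ∈ L, 2 ≤ e) → (∀ e ∈ M, 2 ≤ e) →
    hjVal L = hjVal M → L = M := by
  intro L
  induction L with
  | nil =>
    intro M hL hM h
    cases M with
    | nil => rfl
    | cons y ys =>
      exfalso
      have := hj_gt_one hM (by simp)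
      rw [← h] at this
      simp [hjVal] at this
      linarith
  | cons x xs ih =>
    intro M hL hM h
    cases M with
    | nil =>
      exfalso
      have := hj_gt_one hL (by simp)
      rw [h] at this
      simp [hjVal] at this
      linarith
    | cons y ys =>
      cases xs with
      | nil =>
        cases ys with
        | nil =>
          have : (x:ℚ) = (y:ℚ) := h
          have : x = y := by exact_mod_cast this
          rw [this]
        | cons z t =>
          exfalso
          have hv := hj_gt_one (fun e he => hM e (by simp [he])) (show z::t ≠ [] by simp)
          obtain ⟨f1, f2⟩ := frac_aux hv
          have h' : (x:ℚ) = (y:ℚ) - (hjVal (z::t))⁻¹ := h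
          exact int_cast_between (p := y) (q := x) (by linarith) (by linarith)
      | cons x2 t2 =>
        cases ys with
        | nil =>
          exfalso
          have hv := hj_gt_one (fun e he => hL e (by simp [he])) (show x2::t2 ≠ [] by simp)
          obtain ⟨f1, f2⟩ := frac_aux hv
          have h' : (x:ℚ) - (hjVal (x2::t2))⁻¹ = (y:ℚ) := h
          exact int_cast_between (p := x) (q := y) (by linarith) (by linarith)
        | cons y2 s2 =>
          have hu := hj_gt_one (fun e he => hL e (by simp [he])) (show x2::t2 ≠ [] by simp)
          have hv := hj_gt_one (fun e he => hM e (by simp [he])) (show y2::s2 ≠ [] by simp)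
          obtain ⟨fu1, fu2⟩ := frac_aux hu
          obtain ⟨fv1, fv2⟩ := frac_aux hv
          have h' : (x:ℚ) - (hjVal (x2::t2))⁻¹ = (y:ℚ) - (hjVal (y2::s2))⁻¹ := h
          have hxy : x = y := by
            by_contra hne
            rcases lt_or_gt_of_ne hne with hlt | hlt
            · exact int_cast_between (p := y) (q := x)
                (by exact_mod_cast by exact_mod_cast sub_pos.mpr (by exact_mod_cast hlt : (x:ℚ) < y))
                (by linarith)
            · exact int_cast_between (p := x) (q := y)
                (by exact_mod_cast sub_pos.mpr (by exact_mod_cast hlt : (y:ℚ) < x))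
                (by linarith)
          subst hxy
          have : (hjVal (x2::t2))⁻¹ = (hjVal (y2::s2))⁻¹ := by linarith
          have hval : hjVal (x2::t2) = hjVal (y2::s2) := by
            exact inv_injective this
          have := ih (y2::s2) (fun e he => hL e (by simp [he])) (fun e he => hM e (by simp [he])) hval
          rw [this]

lemma nd_cons (x : ℤ) (xs : List ℤ) :
    nd (x :: xs) = (x * (nd xs).1 - (nd xs).2, (nd xs).1) := rfl

def incHead : List ℤ → List ℤ
  | [] => []
  | x :: xs => (x + 1) :: xs

def incLast : List ℤ → List ℤ
  | [] => []
  | [x] => [x + 1]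
  | x :: y :: t => x :: incLast (y :: t)

lemma nd_incHead (M : List ℤ) :
    nd (incHead M) = ((nd M).1 + (nd M).2, (nd M).2) := by
  cases M with
  | nil => simp [incHead, nd]
  | cons x xs =>
    simp only [incHead, nd_cons, Prod.mk.injEq]
    exact ⟨by ring, trivial⟩

lemma dropLast_incHead (M : List ℤ) : (incHead M).dropLast = incHead M.dropLast := by
  match M with
  | [] => rfl
  | [x] => rfl
  | x :: y :: t =>
    simp only [incHead, List.dropLast_cons_of_ne_nil (by simp : (y :: t) ≠ [])]

lemma incHead_ne_nil {M : List ℤ} (h : M ≠ []) : incHead M ≠ [] := by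
  cases M <;> simp [incHead] at *

lemma incLast_ne_nil {M : List ℤ} (h : M ≠ []) : incLast M ≠ [] := by
  match M with
  | [x] => simp [incLast]
  | x :: y :: t => simp [incLast]

lemma incHead_length (M : List ℤ) : (incHead M).length = M.length := by
  cases M <;> simp [incHead]

lemma incLast_length (M : List ℤ) : (incLast M).length = M.length := by
  match M with
  | [] => rfl
  | [x] => rfl
  | x :: y :: t => simp [incLast, incLast_length (y :: t)]

lemma incHead_sum {M : List ℤ} (h : M ≠ []) : (incHead M).sum = M.sum + 1 := by
  cases M with
  | nil => simp at h
  | cons x xs => simp [incHead]; ring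

lemma incLast_sum {M : List ℤ} (h : M ≠ []) : (incLast M).sum = M.sum + 1 := by
  match M with
  | [x] => simp [incLast]
  | x :: y :: t =>
    simp [incLast, incLast_sum (show (y:: t) ≠ [] by simp)]
    ring

lemma incHead_mem {M : List ℤ} (h : ∀ e ∈ M, 2 ≤ e) : ∀ e ∈ incHead M, 2 ≤ e := by
  cases M with
  | nil => simp [incHead]
  | cons x xs =>
    intro e he
    simp only [incHead, List.mem_cons] at he
    rcases he with rfl | he
    · have := h x (by simp); omega
    · exact h e (by simp [he])

lemma incLast_mem {M : List ℤ} (h : ∀ e ∈ M, 2 ≤ e) : ∀ e ∈ incLast M, 2 ≤ e := by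
  match M with
  | [] => simp [incLast]
  | [x] =>
    intro e he
    simp only [incLast, List.mem_singleton] at he
    have := h x (by simp); omega
  | x :: y :: t =>
    intro e he
    simp only [incLast, List.mem_cons] at he
    rcases he with rfl | he
    · exact h e (by simp)
    · exact incLast_mem (fun e' he' => h e' (by simp [he'])) e he

lemma dropLast_incLast (M : List ℤ) : (incLast M).dropLast = M.dropLast := by
  match M with
  | [] => rfl
  | [x] => rfl
  | x :: y :: t =>
    simp only [incLast]
    rw [List.dropLast_cons_of_ne_nil (incLast_ne_nil (by simp)),
      List.dropLast_cons_of_ne_nil (by simp : (y :: t) ≠ []),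
      dropLast_incLast (y :: t)]

lemma nd_append : ∀ (x : ℤ) (M : List ℤ) (y : ℤ),
    nd ((x :: M) ++ [y]) = (y * (nd (x :: M)).1 - (nd (x :: M).dropLast).1,
      y * (nd (x :: M)).2 - (nd (x :: M).dropLast).2) := by
  intro x M
  induction M generalizing x with
  | nil => intro y; simp only [List.cons_append, List.nil_append, nd, List.dropLast_singleton, Prod.mk.injEq]; exact ⟨by ring, trivial⟩
  | cons m t ih =>
    intro y
    have h1 : ((x :: m :: t) ++ [y]) = x :: ((m :: t) ++ [y]) := by simp
    rw [h1, nd_cons, ih m y]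
    simp only [List.dropLast_cons_of_ne_nil (by simp : (m :: t) ≠ []), nd_cons, Prod.mk.injEq]
    exact ⟨by ring, trivial⟩

lemma nd_incLast : ∀ (x : ℤ) (M : List ℤ),
    nd (incLast (x :: M)) = ((nd (x :: M)).1 + (nd (x :: M).dropLast).1,
      (nd (x :: M)).2 + (nd (x :: M).dropLast).2) := by
  intro x M
  induction M generalizing x with
  | nil => simp only [incLast, nd, List.dropLast_singleton, Prod.mk.injEq]; constructor <;> ring
  | cons m t ih =>
    have h1 : incLast (x :: m :: t) = x :: incLast (m :: t) := rfl
    rw [h1, nd_cons, ih m]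
    simp only [List.dropLast_cons_of_ne_nil (by simp : (m :: t) ≠ []), nd_cons, Prod.mk.injEq]
    exact ⟨by ring, trivial⟩

def opA (L : List ℤ) : List ℤ := incHead L ++ [2]
def opB (L : List ℤ) : List ℤ := 2 :: incLast L

def W (n a : ℕ) : List ℤ :=
  if h : 1 ≤ a ∧ a < n ∧ 2 < n then
    (if 2 * a < n then opA (W (n - a) a) else opB (W a (2 * a - n)))
  else [4]
termination_by n
decreasing_by
  · omega
  · omega

lemma W_spec : ∀ n a : ℕ, 1 ≤ a → a < n → Nat.gcd n a = 1 →
    (∀ e ∈ W n a, 2 ≤ e) ∧ W n a ≠ [] ∧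
    nd (W n a) = ((n : ℤ) ^ 2, (n : ℤ) * (a : ℤ) - 1) ∧
    nd ((W n a).dropLast) = ((n : ℤ) * ((n : ℤ) - (a : ℤ)) - 1,
      (a : ℤ) * ((n : ℤ) - (a : ℤ)) - 1) ∧
    (W n a).sum = 3 * ((W n a).length : ℤ) + 1 := by
  intro n
  induction n using Nat.strong_induction_on with
  | _ n ih =>
    intro a ha1 ha2 hg
    by_cases hn : 2 < n
    case neg =>
      -- n = 2, a = 1
      have hn2 : n = 2 := by omega
      have ha : a = 1 := by omega
      subst hn2; subst ha
      rw [W]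
      norm_num [nd, List.sum_cons]
    case pos =>
      rw [W, dif_pos ⟨ha1, ha2, hn⟩]
      by_cases h2 : 2 * a < n
      · -- case A : recurse on (n - a, a)
        rw [if_pos h2]
        have hgcd : Nat.gcd (n - a) a = 1 := by
          rw [Nat.gcd_sub_self_left (by omega)]; exact hg
        obtain ⟨hE, hne, hnd, hndd, hsum⟩ := ih (n - a) (by omega) a ha1 (by omega) hgcd
        set L₀ := W (n - a) a with hL₀
        have hcast : ((n - a : ℕ) : ℤ) = (n : ℤ) - (a : ℤ) := by omega
        rw [hcast] at hnd hndd
        have hIne : incHead L₀ ≠ [] := incHead_ne_nil hne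
        obtain ⟨z, zs, hzz⟩ := List.exists_cons_of_ne_nil hIne
        have hndA : nd (opA L₀) = ((n:ℤ)^2, (n:ℤ) * (a:ℤ) - 1) := by
          rw [opA, hzz, nd_append, ← hzz, nd_incHead, dropLast_incHead, nd_incHead,
            hnd, hndd]
          simp only [Prod.mk.injEq]
          constructor <;> ring
        have hnddA : nd ((opA L₀).dropLast) = ((n:ℤ) * ((n:ℤ) - (a:ℤ)) - 1,
            (a:ℤ) * ((n:ℤ) - (a:ℤ)) - 1) := by
          rw [opA, List.dropLast_concat, nd_incHead, hnd]
          simp only [Prod.mk.injEq]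
          constructor <;> ring
        refine ⟨?_, ?_, hndA, hnddA, ?_⟩
        · intro e he
          rw [opA, List.mem_append] at he
          rcases he with he | he
          · exact incHead_mem hE e he
          · simp at he; omega
        · simp [opA]
        · rw [opA]
          simp only [List.sum_append, List.length_append, incHead_sum hne,
            incHead_length, List.sum_cons, List.sum_nil, List.length_cons,
            List.length_nil]
          push_cast
          omega
      · -- case B : recurse on (a, 2a - n)
        rw [if_neg h2]
        have hne2 : 2 * a ≠ n := by
          intro hEq
          have hd : a ∣ Nat.gcd n a := Nat.dvd_gcd ⟨2, by omega⟩ dvd_rfl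
          rw [hg] at hd
          have : a = 1 := Nat.eq_one_of_dvd_one hd
          omega
        have hlt : n < 2 * a := by omega
        have hgcd : Nat.gcd a (2 * a - n) = 1 := by
          have hd1 := Nat.gcd_dvd_left a (2 * a - n)
          have hd2 := Nat.gcd_dvd_right a (2 * a - n)
          have hd3 : Nat.gcd a (2 * a - n) ∣ 2 * a := Dvd.dvd.mul_left hd1 2
          have hd4 : Nat.gcd a (2 * a - n) ∣ n := by
            have := Nat.dvd_sub hd3 hd2
            rwa [show 2 * a - (2 * a - n) = n by omega] at this
          have : Nat.gcd a (2 * a - n) ∣ 1 := hg ▸ Nat.dvd_gcd hd4 hd1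
          exact Nat.eq_one_of_dvd_one this
        obtain ⟨hE, hne, hnd, hndd, hsum⟩ :=
          ih a ha2 (2 * a - n) (by omega) (by omega) hgcd
        set L₀ := W a (2 * a - n) with hL₀
        have hcast : ((2 * a - n : ℕ) : ℤ) = 2 * (a : ℤ) - (n : ℤ) := by omega
        rw [hcast] at hnd hndd
        obtain ⟨z, zs, hzz⟩ := List.exists_cons_of_ne_nil hne
        have hndI : nd (incLast L₀) = ((nd L₀).1 + (nd L₀.dropLast).1,
            (nd L₀).2 + (nd L₀.dropLast).2) := by
          rw [hzz, nd_incLast, ← hzz]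
        have hndB : nd (opB L₀) = ((n:ℤ)^2, (n:ℤ) * (a:ℤ) - 1) := by
          rw [opB, nd_cons, hndI, hnd, hndd]
          simp only [Prod.mk.injEq]
          constructor <;> ring
        have hnddB : nd ((opB L₀).dropLast) = ((n:ℤ) * ((n:ℤ) - (a:ℤ)) - 1,
            (a:ℤ) * ((n:ℤ) - (a:ℤ)) - 1) := by
          rw [opB, List.dropLast_cons_of_ne_nil (incLast_ne_nil hne),
            dropLast_incLast, nd_cons, hndd]
          simp only [Prod.mk.injEq]
          constructor <;> ring
        refine ⟨?_, ?_, hndB, hnddB, ?_⟩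
        · intro e he
          rw [opB, List.mem_cons] at he
          rcases he with rfl | he
          · omega
          · exact incLast_mem hE e he
        · simp [opB]
        · rw [opB]
          simp only [List.sum_cons, List.length_cons, incLast_sum hne, incLast_length]
          push_cast
          omega


lemma wahl_sum {n a : ℤ} {L : List ℤ} (h : IsWahlChain n a L) :
    L.sum = 3 * (L.length : ℤ) + 1 := by
  obtain ⟨ha, han, hg, hE, hV⟩ := h
  set N := n.toNat with hN
  set A := a.toNat with hA
  have hNn : (N : ℤ) = n := Int.toNat_of_nonneg (by omega)
  have hAa : (A : ℤ) = a := Int.toNat_of_nonneg (by omega)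
  have hA1 : 1 ≤ A := by omega
  have hAN : A < N := by omega
  have hgN : Nat.gcd N A = 1 := by
    have h1 : n.natAbs = N := by omega
    have h2 : a.natAbs = A := by omega
    rwa [Int.gcd, h1, h2] at hg
  obtain ⟨hWE, hWne, hWnd, _, hWsum⟩ := W_spec N A hA1 hAN hgN
  have hq : (0:ℤ) < n * a - 1 := by nlinarith
  have hWval : hjVal (W N A) = ((n ^ 2 : ℤ) : ℚ) / ((n * a - 1 : ℤ) : ℚ) := by
    rw [hjVal_nd hWE hWne, hWnd]
    push_cast [hNn, hAa]
    ring_nf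
  have hLW : L = W N A := hj_unique L (W N A) hE hWE (hV.trans hWval.symm)
  rw [hLW]
  exact hWsum


end Aux

/-- For a del Pezzo Wahl chain of degree ≥ 5 (i.e. weight ≤ 4):
in type (II) the central mark is ≥ 5; in type (I), if the marking data is not
`[0, 2̲]`, the central mark (the first or last entry) is ≥ 3. -/
theorem stmt7 (n a : ℤ) (L : List ℤ) (h : IsWahlChain n a L) :
    (∀ lam₁ lam₂ : ℤ, ∀ i : ℕ, 1 ≤ i → i + 1 < L.length →
        0 ≤ lam₁ → 0 ≤ lam₂ → lam₁ + lam₂ ≤ 4 →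
        AdmitsZCF (L.take i) lam₁ → AdmitsZCF (L.drop (i + 1)) lam₂ →
        5 ≤ L.getD i 0) ∧
    (∀ lam : ℤ, 0 ≤ lam → lam ≤ 4 →
      (∀ K : List ℤ, K.length = L.dropLast.length →
          (∀ i : ℕ, K.getD i 0 ≤ L.dropLast.getD i 0) →
          L.dropLast.sum - K.sum = lam + 1 → IsZCF K →
          ¬(K = [0] ∧ L.getLast! = 2) → 3 ≤ L.getLast!) ∧
      (∀ K : List ℤ, K.length = L.tail.length →
          (∀ i : ℕ, K.getD i 0 ≤ L.tail.getD i 0) →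
          L.tail.sum - K.sum = lam + 1 → IsZCF K →
          ¬(K = [0] ∧ L.headI = 2) → 3 ≤ L.headI)) := by
  have hsum := wahl_sum h
  constructor
  · -- type (II)
    intro lam₁ lam₂ i hi1 hi2 hl1 hl2 hl12 hA hB
    obtain ⟨K₁, hK₁len, _, hK₁sum, hK₁z⟩ := hA
    obtain ⟨K₂, hK₂len, _, hK₂sum, hK₂z⟩ := hB
    obtain ⟨hz1l, hz1s⟩ := zcf_len_sum hK₁z
    obtain ⟨hz2l, hz2s⟩ := zcf_len_sum hK₂z
    have hilt : i < L.length := by omega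
    have hlen1 : (L.take i).length = i := by simp; omega
    have hlen2 : (L.drop (i + 1)).length = L.length - (i + 1) := by simp
    -- decomposition of the sum
    have hdecomp : L.sum = (L.take i).sum + L[i] + (L.drop (i + 1)).sum := by
      conv_lhs => rw [← List.take_append_drop i L]
      rw [List.sum_append, List.drop_eq_getElem_cons hilt, List.sum_cons]
      ring
    rw [List.getD_eq_getElem L 0 hilt]
    rw [hK₁len, hlen1] at hz1s
    rw [hK₂len, hlen2] at hz2s
    have hc : ((L.length - (i + 1) : ℕ) : ℤ) = (L.length : ℤ) - (i : ℤ) - 1 := by omega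
    rw [hc] at hz2s
    omega
  · intro lam hl0 hl4
    constructor
    · -- last entry
      intro K hKlen _ hKsum hKz _
      obtain ⟨hzl, hzs⟩ := zcf_len_sum hKz
      have hLne : L ≠ [] := by
        intro hnil
        rw [hnil] at hKlen
        have : K.length = 0 := by simpa using hKlen
        omega
      have hglast : L.getLast! = L.getLast hLne :=
        List.getLast!_of_getLast? (List.getLast?_eq_getLast hLne ▸ rfl)
      have hdecomp : L.dropLast.sum + L.getLast hLne = L.sum := by
        conv_rhs => rw [← List.dropLast_append_getLast hLne]
        simp
      have hlendl : L.dropLast.length = L.length - 1 := by simp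
      rw [hKlen, hlendl] at hzs
      have hlen1 : 1 ≤ L.length := by
        cases L
        · exact absurd rfl hLne
        · simp
      have hc : ((L.length - 1 : ℕ) : ℤ) = (L.length : ℤ) - 1 := by omega
      rw [hc] at hzs
      rw [hglast]
      omega
    · -- head entry
      intro K hKlen _ hKsum hKz _
      obtain ⟨hzl, hzs⟩ := zcf_len_sum hKz
      have hLne : L ≠ [] := by
        intro hnil
        rw [hnil] at hKlen
        have : K.length = 0 := by simpa using hKlen
        omega
      have hdecomp : L.headI + L.tail.sum = L.sum := by
        conv_rhs => rw [← List.cons_head!_tail hLne]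
        simp
        rfl
      have hlentl : L.tail.length = L.length - 1 := by simp
      rw [hKlen, hlentl] at hzs
      have hlen1 : 1 ≤ L.length := by
        cases L
        · exact absurd rfl hLne
        · simp
      have hc : ((L.length - 1 : ℕ) : ℤ) = (L.length : ℤ) - 1 := by omega
      rw [hc] at hzs
      omega
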